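/- Let H0 and H1 be complex Hilbert spaces, let A0 on H0 and A1 on H1 be bounded operators, and let δ > 0. Assume: (a) for every bounded Y : H0 → H1 there exists a bounded X : H0 → H1 with X A0 − A1 X = Y; and (b) every bounded X : H0 → H1 satisfies δ·‖X‖ ≤ ‖X A0 − A1 X‖. Let B : H1 → H0 and C : H0 → H1 be bounded operators such that √(‖B‖·‖C‖) < δ/2. Then there exists a unique bounded operator K : H0 → H1 with 2·‖B‖·‖K‖ ≤ δ satisfying the Riccati equation K A0 − A1 K + K B K = C; moreover this K satisfies ‖K‖ ≤ ‖C‖ / (δ/2 + √(δ²/4 − ‖B‖·‖C‖)). (Bounded-operator version of Theorem 4.1 of the paper.) -/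

import Mathlib

set_option maxHeartbeats 1000000 in
open ContinuousLinearMap in
/-- Bounded-operator version of Theorem 4.1 of the paper: if the Sylvester operator
`X ↦ X A0 - A1 X` is surjective and bounded below by `δ > 0`, and
`√(‖B‖·‖C‖) < δ/2`, then the Riccati equation `K A0 - A1 K + K B K = C` has a unique
bounded solution `K` with `2‖B‖‖K‖ ≤ δ`; moreover this solution satisfies
`‖K‖ ≤ ‖C‖ / (δ/2 + √(δ²/4 - ‖B‖‖C‖))`. -/
theorem riccati_existsUnique_of_sylvester_bound
    {H0 : Type*} [NormedAddCommGroup H0] [InnerProductSpace ℂ H0] [CompleteSpace H0]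
    {H1 : Type*} [NormedAddCommGroup H1] [InnerProductSpace ℂ H1] [CompleteSpace H1]
    (A0 : H0 →L[ℂ] H0) (A1 : H1 →L[ℂ] H1) (δ : ℝ) (hδ : 0 < δ)
    (hSurj : ∀ Y : H0 →L[ℂ] H1, ∃ X : H0 →L[ℂ] H1, X ∘L A0 - A1 ∘L X = Y)
    (hBound : ∀ X : H0 →L[ℂ] H1, δ * ‖X‖ ≤ ‖X ∘L A0 - A1 ∘L X‖)
    (B : H1 →L[ℂ] H0) (C : H0 →L[ℂ] H1)
    (hBC : Real.sqrt (‖B‖ * ‖C‖) < δ / 2) :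
    (∃! K : H0 →L[ℂ] H1,
        2 * ‖B‖ * ‖K‖ ≤ δ ∧ K ∘L A0 - A1 ∘L K + (K ∘L B) ∘L K = C) ∧
      ∀ K : H0 →L[ℂ] H1,
        2 * ‖B‖ * ‖K‖ ≤ δ → K ∘L A0 - A1 ∘L K + (K ∘L B) ∘L K = C →
          ‖K‖ ≤ ‖C‖ / (δ / 2 + Real.sqrt (δ ^ 2 / 4 - ‖B‖ * ‖C‖)) := by
  classical
  have hb0 : (0:ℝ) ≤ ‖B‖ := norm_nonneg _
  have hc0 : (0:ℝ) ≤ ‖C‖ := norm_nonneg _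
  have hbc : ‖B‖ * ‖C‖ < δ^2/4 := by
    nlinarith [Real.sq_sqrt (mul_nonneg hb0 hc0), Real.sqrt_nonneg (‖B‖ * ‖C‖)]
  set s := Real.sqrt (δ^2/4 - ‖B‖*‖C‖) with hs
  have hs0 : 0 < s := Real.sqrt_pos.mpr (by linarith)
  have hss : s^2 = δ^2/4 - ‖B‖*‖C‖ := Real.sq_sqrt (by linarith)
  set ρ := ‖C‖ / (δ/2 + s) with hρ
  have hden : 0 < δ/2 + s := by linarith
  have hρ0 : 0 ≤ ρ := div_nonneg hc0 hden.le
  have h1 : ρ * (δ/2 + s) = ‖C‖ := div_mul_cancel₀ _ hden.ne'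
  have hbρ : ‖B‖ * ρ = δ / 2 - s := by
    have h2 : (‖B‖*ρ) * (δ/2+s) = (δ/2 - s) * (δ/2+s) := by nlinarith [hss, h1]
    exact mul_right_cancel₀ hden.ne' h2
  have hbρlt : ‖B‖ * ρ < δ/2 := by rw [hbρ]; linarith
  have hkey : δ * ρ = ‖C‖ + ‖B‖ * ρ^2 := by nlinarith [hbρ, h1]
  -- operator identities
  have hSsub : ∀ X Y : H0 →L[ℂ] H1, (X - Y) ∘L A0 - A1 ∘L (X - Y)
      = (X ∘L A0 - A1 ∘L X) - (Y ∘L A0 - A1 ∘L Y) := by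
    intro X Y; rw [sub_comp, comp_sub]; abel
  have hQn : ∀ X Y : H0 →L[ℂ] H1,
      ‖(X ∘L B) ∘L X - (Y ∘L B) ∘L Y‖ ≤ ‖B‖ * (‖X‖ + ‖Y‖) * ‖X - Y‖ := by
    intro X Y
    have hQ : (X ∘L B) ∘L X - (Y ∘L B) ∘L Y
        = (X ∘L B) ∘L (X - Y) + ((X - Y) ∘L B) ∘L Y := by
      rw [comp_sub, sub_comp, sub_comp]; abel
    rw [hQ]
    calc ‖(X ∘L B) ∘L (X - Y) + ((X - Y) ∘L B) ∘L Y‖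
        ≤ ‖(X ∘L B) ∘L (X - Y)‖ + ‖((X - Y) ∘L B) ∘L Y‖ := norm_add_le _ _
      _ ≤ ‖X‖ * ‖B‖ * ‖X - Y‖ + ‖X - Y‖ * ‖B‖ * ‖Y‖ := by
          gcongr
          · exact le_trans (opNorm_comp_le _ _) (by gcongr; exact opNorm_comp_le _ _)
          · exact le_trans (opNorm_comp_le _ _) (by gcongr; exact opNorm_comp_le _ _)
      _ ≤ ‖B‖ * (‖X‖ + ‖Y‖) * ‖X - Y‖ := by
          nlinarith [norm_nonneg (X-Y), norm_nonneg B, norm_nonneg X, norm_nonneg Y]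
  have hQnself : ∀ X : H0 →L[ℂ] H1, ‖(X ∘L B) ∘L X‖ ≤ ‖B‖ * ‖X‖^2 := by
    intro X
    calc ‖(X ∘L B) ∘L X‖ ≤ ‖X‖ * ‖B‖ * ‖X‖ :=
          le_trans (opNorm_comp_le _ _) (by gcongr; exact opNorm_comp_le _ _)
      _ = ‖B‖ * ‖X‖^2 := by ring
  -- inverse of the Sylvester operator
  set g : (H0 →L[ℂ] H1) → (H0 →L[ℂ] H1) := fun Y => (hSurj Y).choose with hgdef
  have hgS : ∀ Y, (g Y) ∘L A0 - A1 ∘L (g Y) = Y := fun Y => (hSurj Y).choose_spec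
  have hgnorm : ∀ Y, ‖g Y‖ ≤ ‖Y‖ / δ := by
    intro Y
    have h := hBound (g Y); rw [hgS Y] at h
    rw [le_div_iff₀ hδ, mul_comm]; exact h
  have hinj : ∀ X Y : H0 →L[ℂ] H1,
      X ∘L A0 - A1 ∘L X = Y ∘L A0 - A1 ∘L Y → X = Y := by
    intro X Y h
    have h2 := hBound (X - Y)
    rw [hSsub X Y, h, sub_self, norm_zero] at h2
    have h3 : ‖X - Y‖ ≤ 0 := by nlinarith
    have := le_antisymm h3 (norm_nonneg _)
    exact sub_eq_zero.mp (norm_eq_zero.mp this)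
  -- the "moreover" bound: every admissible solution has norm ≤ ρ
  have hmore : ∀ K : H0 →L[ℂ] H1, 2 * ‖B‖ * ‖K‖ ≤ δ →
      K ∘L A0 - A1 ∘L K + (K ∘L B) ∘L K = C → ‖K‖ ≤ ρ := by
    intro K hK hR
    have hSK : K ∘L A0 - A1 ∘L K = C - (K ∘L B) ∘L K := eq_sub_of_add_eq hR
    have h2 := hBound K
    rw [hSK] at h2
    have h3 : ‖C - (K ∘L B) ∘L K‖ ≤ ‖C‖ + ‖B‖ * ‖K‖^2 :=
      le_trans (norm_sub_le _ _) (by gcongr; exact hQnself K)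
    have h23 : δ * ‖K‖ ≤ ‖C‖ + ‖B‖ * ‖K‖^2 := le_trans h2 h3
    by_contra hcon
    push_neg at hcon
    have hp : 0 < δ - ‖B‖ * (‖K‖ + ρ) := by nlinarith
    nlinarith [mul_pos (sub_pos.mpr hcon) hp, h23, hkey]
  -- the contraction
  set Φ : (H0 →L[ℂ] H1) → (H0 →L[ℂ] H1) := fun K => g (C - (K ∘L B) ∘L K) with hΦdef
  have hΦfix : ∀ K, Φ K = K ↔ K ∘L A0 - A1 ∘L K + (K ∘L B) ∘L K = C := by
    intro K
    constructor
    · intro h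
      have := hgS (C - (K ∘L B) ∘L K)
      rw [show g (C - (K ∘L B) ∘L K) = Φ K from rfl, h] at this
      rw [this]; abel
    · intro h
      apply hinj
      rw [hgS (C - (K ∘L B) ∘L K)]
      exact (eq_sub_of_add_eq h).symm
  set M := Metric.closedBall (0 : H0 →L[ℂ] H1) ρ with hM
  have hMc : IsClosed M := Metric.isClosed_closedBall
  have : CompleteSpace M := hMc.completeSpace_coe
  have : Nonempty M := ⟨⟨0, Metric.mem_closedBall_self hρ0⟩⟩
  have hmem : ∀ K : H0 →L[ℂ] H1, K ∈ M ↔ ‖K‖ ≤ ρ := by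
    intro K; rw [Metric.mem_closedBall, dist_zero_right]
  have hΦmaps : ∀ K : H0 →L[ℂ] H1, ‖K‖ ≤ ρ → ‖Φ K‖ ≤ ρ := by
    intro K hK
    have h2 : ‖C - (K ∘L B) ∘L K‖ ≤ ‖C‖ + ‖B‖ * ρ^2 := by
      have ha := hQnself K
      have hK2 : ‖K‖^2 ≤ ρ^2 := by nlinarith [norm_nonneg K]
      have hbK : ‖B‖ * ‖K‖^2 ≤ ‖B‖ * ρ^2 := mul_le_mul_of_nonneg_left hK2 hb0
      calc ‖C - (K ∘L B) ∘L K‖ ≤ ‖C‖ + ‖(K ∘L B) ∘L K‖ := norm_sub_le _ _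
        _ ≤ ‖C‖ + ‖B‖ * ρ^2 := by linarith
    have h3 := hgnorm (C - (K ∘L B) ∘L K)
    have h4 : (‖C‖ + ‖B‖ * ρ^2) / δ = ρ := by
      rw [← hkey]; field_simp
    calc ‖Φ K‖ ≤ ‖C - (K ∘L B) ∘L K‖ / δ := h3
      _ ≤ (‖C‖ + ‖B‖ * ρ^2) / δ := by gcongr
      _ = ρ := h4
  have hΦlip : ∀ X Y : H0 →L[ℂ] H1, ‖X‖ ≤ ρ → ‖Y‖ ≤ ρ →
      ‖Φ X - Φ Y‖ ≤ (2 * ‖B‖ * ρ / δ) * ‖X - Y‖ := by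
    intro X Y hX hY
    have hS : (Φ X - Φ Y) ∘L A0 - A1 ∘L (Φ X - Φ Y)
        = (Y ∘L B) ∘L Y - (X ∘L B) ∘L X := by
      rw [hSsub, hgS, hgS]; abel
    have h2 := hBound (Φ X - Φ Y)
    rw [hS] at h2
    have h3 := hQn Y X
    have h4 : ‖Y - X‖ = ‖X - Y‖ := norm_sub_rev _ _
    rw [h4] at h3
    have hprod : 0 ≤ ‖B‖ * ‖X - Y‖ * (2*ρ - ‖X‖ - ‖Y‖) :=
      mul_nonneg (mul_nonneg hb0 (norm_nonneg _)) (by linarith)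
    have h5 : δ * ‖Φ X - Φ Y‖ ≤ 2 * ‖B‖ * ρ * ‖X - Y‖ := by
      nlinarith [hprod]
    rw [div_mul_eq_mul_div, le_div_iff₀ hδ]
    nlinarith
  set q : NNReal := ⟨2 * ‖B‖ * ρ / δ, by positivity⟩ with hq
  have hq1 : q < 1 := by
    rw [← NNReal.coe_lt_coe]
    show 2 * ‖B‖ * ρ / δ < 1
    rw [div_lt_one hδ]; linarith
  set f : M → M := fun K => ⟨Φ K, (hmem _).mpr (hΦmaps K ((hmem _).mp K.2))⟩ with hf
  have hcontr : ContractingWith q f := by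
    constructor
    · exact hq1
    · apply LipschitzWith.of_dist_le_mul
      intro x y
      rw [Subtype.dist_eq]
      show dist (Φ x) (Φ y) ≤ (q:ℝ) * dist (x:H0 →L[ℂ] H1) y
      rw [dist_eq_norm, dist_eq_norm]
      exact hΦlip x y ((hmem _).mp x.2) ((hmem _).mp y.2)
  obtain ⟨Kf, hfixed⟩ : ∃ x : M, f x = x :=
    ⟨hcontr.fixedPoint f, hcontr.fixedPoint_isFixedPt⟩
  have hΦKf : Φ (Kf : H0 →L[ℂ] H1) = Kf := congrArg Subtype.val hfixed
  have hKfnorm : ‖(Kf : H0 →L[ℂ] H1)‖ ≤ ρ := (hmem _).mp Kf.2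
  have hKfric : (Kf : H0 →L[ℂ] H1) ∘L A0 - A1 ∘L (Kf : H0 →L[ℂ] H1)
      + ((Kf : H0 →L[ℂ] H1) ∘L B) ∘L (Kf : H0 →L[ℂ] H1) = C := (hΦfix _).mp hΦKf
  have hKfb : 2 * ‖B‖ * ‖(Kf : H0 →L[ℂ] H1)‖ ≤ δ := by
    have := mul_le_mul_of_nonneg_left hKfnorm hb0
    linarith
  -- uniqueness
  have huniq : ∀ K K' : H0 →L[ℂ] H1,
      2 * ‖B‖ * ‖K‖ ≤ δ → K ∘L A0 - A1 ∘L K + (K ∘L B) ∘L K = C →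
      2 * ‖B‖ * ‖K'‖ ≤ δ → K' ∘L A0 - A1 ∘L K' + (K' ∘L B) ∘L K' = C →
      K = K' := by
    intro K K' hK hRK hK' hRK'
    have hKρ := hmore K hK hRK
    have hK'ρ := hmore K' hK' hRK'
    have hS : (K - K') ∘L A0 - A1 ∘L (K - K')
        = (K' ∘L B) ∘L K' - (K ∘L B) ∘L K := by
      rw [hSsub, eq_sub_of_add_eq hRK, eq_sub_of_add_eq hRK']; abel
    have h2 := hBound (K - K')
    rw [hS] at h2
    have h3 := hQn K' K
    rw [norm_sub_rev K' K] at h3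
    have h3b : ‖B‖ * (‖K'‖ + ‖K‖) * ‖K - K'‖ ≤ 2 * ‖B‖ * ρ * ‖K - K'‖ := by
      have hc1 : ‖B‖ * (‖K'‖ + ‖K‖) ≤ 2 * ‖B‖ * ρ := by
        have := mul_le_mul_of_nonneg_left (show ‖K'‖ + ‖K‖ ≤ 2*ρ by linarith) hb0
        linarith
      exact mul_le_mul_of_nonneg_right hc1 (norm_nonneg _)
    have h4 : δ * ‖K - K'‖ ≤ 2 * ‖B‖ * ρ * ‖K - K'‖ := le_trans h2 (le_trans h3 h3b)
    have h5 : ‖K - K'‖ ≤ 0 := by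
      by_contra hpos
      push_neg at hpos
      have h6 := mul_lt_mul_of_pos_right (show 2*‖B‖*ρ < δ by linarith) hpos
      linarith
    have := le_antisymm h5 (norm_nonneg _)
    exact sub_eq_zero.mp (norm_eq_zero.mp this)
  refine ⟨⟨(Kf : H0 →L[ℂ] H1), ⟨hKfb, hKfric⟩, ?_⟩, hmore⟩
  intro K ⟨hK1, hK2⟩
  exact huniq K Kf hK1 hK2 hKfb hKfric
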